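/- arXiv:2308.05958 — 5 statements merged into one kernel-verified Lean document; each statement's English description precedes it below -/
import Mathlib

section
/- Let d ≥ 1 and m ≥ 1 be integers, let s_1, …, s_m ∈ ℝ^d, let b_1, …, b_m ∈ ℝ^d, let r > 0 and δ > 0 be such that |s_j − s_l| ≥ δ for all j ≠ l. Define the m × m complex matrix A by a_{l,j} = exp((r s_l + b_l i)·s_j) = exp(r s_l·s_j + i b_l·s_j), and set p_j = exp((r/2)|s_j|²). Then for every j ∈ {1,…,m}: |a_{j,j}| − p_j ∑_{l ≠ j} |a_{l,j}| / p_l = exp(r|s_j|²) (1 − ∑_{l ≠ j} exp(−r|s_j − s_l|²/2)) ≥ exp(r|s_j|²) (1 − (m−1) exp(−r δ²/2)). -/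
theorem stmt5 (d m : ℕ) (hd : 1 ≤ d) (hm : 1 ≤ m)
    (s b : Fin m → EuclideanSpace ℝ (Fin d)) (r δ : ℝ) (hr : 0 < r) (hδ : 0 < δ)
    (hsep : ∀ j l, j ≠ l → δ ≤ ‖s j - s l‖)
    (A : Matrix (Fin m) (Fin m) ℂ)
    (hA : ∀ l j, A l j = Complex.exp
      (((r * ∑ i, s l i * s j i : ℝ) : ℂ) + Complex.I * ((∑ i, b l i * s j i : ℝ) : ℂ)))
    (p : Fin m → ℝ)
    (hp : ∀ j, p j = Real.exp (r / 2 * ‖s j‖ ^ 2)) :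
    ∀ j : Fin m,
      (‖A j j‖ - p j * ∑ l ∈ Finset.univ.erase j, ‖A l j‖ / p l
        = Real.exp (r * ‖s j‖ ^ 2) *
            (1 - ∑ l ∈ Finset.univ.erase j, Real.exp (-(r * ‖s j - s l‖ ^ 2) / 2))) ∧
      (Real.exp (r * ‖s j‖ ^ 2) *
            (1 - ∑ l ∈ Finset.univ.erase j, Real.exp (-(r * ‖s j - s l‖ ^ 2) / 2))
        ≥ Real.exp (r * ‖s j‖ ^ 2) * (1 - ((m : ℝ) - 1) * Real.exp (-(r * δ ^ 2) / 2))) := by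
  intro j
  have habs : ∀ l j' : Fin m, ‖A l j'‖ = Real.exp (r * ∑ i, s l i * s j' i) := by
    intro l j'
    rw [hA, Complex.norm_exp]
    congr 1
    simp [Complex.add_re, Complex.mul_re]
  have hinner : ∀ l j' : Fin m, (∑ i, s l i * s j' i) = inner ℝ (s l) (s j') := by
    intro l j'
    rw [PiLp.inner_apply]
    simp [RCLike.inner_apply, mul_comm]
  have key : ∀ l : Fin m, p j * (‖A l j‖ / p l)
      = Real.exp (r * ‖s j‖ ^ 2) * Real.exp (-(r * ‖s j - s l‖ ^ 2) / 2) := by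
    intro l
    rw [habs, hp, hp, ← Real.exp_sub, ← Real.exp_add, ← Real.exp_add]
    congr 1
    have hns : ‖s j - s l‖ ^ 2 = ‖s j‖ ^ 2 - 2 * inner ℝ (s j) (s l) + ‖s l‖ ^ 2 :=
      norm_sub_sq_real (s j) (s l)
    have hsym : (inner ℝ (s l) (s j) : ℝ) = inner ℝ (s j) (s l) := real_inner_comm _ _
    rw [hinner, hsym, hns]
    ring
  constructor
  · rw [Finset.mul_sum,
      show (∑ l ∈ Finset.univ.erase j, p j * (‖A l j‖ / p l))
        = ∑ l ∈ Finset.univ.erase j,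
            Real.exp (r * ‖s j‖ ^ 2) * Real.exp (-(r * ‖s j - s l‖ ^ 2) / 2) from
        Finset.sum_congr rfl fun l _ => key l,
      habs, hinner, real_inner_self_eq_norm_sq, ← Finset.mul_sum]
    ring
  · apply mul_le_mul_of_nonneg_left _ (Real.exp_nonneg _)
    apply sub_le_sub_left
    calc ∑ l ∈ Finset.univ.erase j, Real.exp (-(r * ‖s j - s l‖ ^ 2) / 2)
        ≤ ∑ l ∈ Finset.univ.erase j, Real.exp (-(r * δ ^ 2) / 2) := by
          apply Finset.sum_le_sum
          intro l hl
          apply Real.exp_le_exp.mpr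
          have hd' := hsep j l (Finset.ne_of_mem_erase hl).symm
          have : δ ^ 2 ≤ ‖s j - s l‖ ^ 2 :=
            pow_le_pow_left₀ hδ.le hd' 2
          nlinarith
      _ = ((m : ℝ) - 1) * Real.exp (-(r * δ ^ 2) / 2) := by
          rw [Finset.sum_const, Finset.card_erase_of_mem (Finset.mem_univ j)]
          rw [nsmul_eq_mul, Finset.card_univ, Fintype.card_fin, Nat.cast_sub hm,
            Nat.cast_one]
end

section
/- Let d ≥ 1 and m ≥ 1 be integers, let s_1, …, s_m ∈ ℝ^d be points satisfying |s_j − s_l| ≥ δ for all j ≠ l for some δ > 0, and let r > 0 satisfy (m−1) exp(−r δ²/2) < 1. Then for ANY choice of real vectors b_1, …, b_m ∈ ℝ^d, the m × m complex matrix A with entries a_{l,j} = exp(r s_l·s_j + i b_l·s_j) is invertible. -/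
theorem stmt6 (d m : ℕ) (hd : 1 ≤ d) (hm : 1 ≤ m)
    (s : Fin m → EuclideanSpace ℝ (Fin d)) (r δ : ℝ) (hr : 0 < r) (hδ : 0 < δ)
    (hsep : ∀ j l, j ≠ l → δ ≤ ‖s j - s l‖)
    (hsmall : ((m : ℝ) - 1) * Real.exp (-(r * δ ^ 2) / 2) < 1) :
    ∀ b : Fin m → EuclideanSpace ℝ (Fin d),
      IsUnit (Matrix.of fun l j : Fin m => Complex.exp
        (((r * ∑ i, s l i * s j i : ℝ) : ℂ) + Complex.I * ((∑ i, b l i * s j i : ℝ) : ℂ))) := by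
  intro b
  set A : Matrix (Fin m) (Fin m) ℂ := Matrix.of fun l j : Fin m => Complex.exp
      (((r * ∑ i, s l i * s j i : ℝ) : ℂ) + Complex.I * ((∑ i, b l i * s j i : ℝ) : ℂ)) with hA
  set p : Fin m → ℝ := fun k => Real.exp ((r / 2) * ‖s k‖ ^ 2) with hp
  have hppos : ∀ k, 0 < p k := fun k => Real.exp_pos _
  -- inner product facts
  have hinner : ∀ l j, (∑ i, s l i * s j i) = inner ℝ (s l) (s j) := by
    intro l j
    rw [PiLp.inner_apply]
    simp [RCLike.inner_apply, mul_comm]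
  -- the conjugated matrix
  set B : Matrix (Fin m) (Fin m) ℂ :=
    Matrix.diagonal (fun l => ((p l)⁻¹ : ℂ)) * A * Matrix.diagonal (fun j => ((p j : ℝ) : ℂ))
    with hB
  have hBentry : ∀ l j, B l j = ((p l)⁻¹ : ℂ) * A l j * ((p j : ℝ) : ℂ) := by
    intro l j
    simp [hB, Matrix.mul_diagonal, Matrix.diagonal_mul, mul_assoc]
  have hnormA : ∀ l j, ‖A l j‖ = Real.exp (r * ∑ i, s l i * s j i) := by
    intro l j
    simp [hA, Complex.norm_exp]
  have hnormB : ∀ l j, ‖B l j‖ = Real.exp (r * ‖s j‖ ^ 2 - (r / 2) * ‖s l - s j‖ ^ 2) := by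
    intro l j
    rw [hBentry, norm_mul, norm_mul, hnormA]
    have h1 : ‖((p l)⁻¹ : ℂ)‖ = (p l)⁻¹ := by
      rw [← Complex.ofReal_inv]
      simp [abs_of_pos (inv_pos.mpr (hppos l)), (hppos l).le]
    have h2 : ‖((p j : ℝ) : ℂ)‖ = p j := by simp [abs_of_pos (hppos j), (hppos j).le]
    rw [h1, h2, hp]
    rw [← Real.exp_neg, ← Real.exp_add, ← Real.exp_add]
    congr 1
    have hns : ‖s l - s j‖ ^ 2 = ‖s l‖ ^ 2 - 2 * inner ℝ (s l) (s j) + ‖s j‖ ^ 2 :=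
      norm_sub_sq_real (s l) (s j)
    rw [hinner l j, hns]
    ring
  have hdom : ∀ k, ∑ l ∈ Finset.univ.erase k, ‖B l k‖ < ‖B k k‖ := by
    intro k
    have hdiag : ‖B k k‖ = Real.exp (r * ‖s k‖ ^ 2) := by
      rw [hnormB]; simp
    rw [hdiag]
    have hbound : ∀ l ∈ Finset.univ.erase k,
        ‖B l k‖ ≤ Real.exp (-(r * δ ^ 2) / 2) * Real.exp (r * ‖s k‖ ^ 2) := by
      intro l hl
      have hlk : l ≠ k := Finset.ne_of_mem_erase hl
      rw [hnormB, ← Real.exp_add]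
      apply Real.exp_le_exp.mpr
      have hsep' : δ ≤ ‖s l - s k‖ := hsep l k hlk
      have : δ ^ 2 ≤ ‖s l - s k‖ ^ 2 := by
        apply pow_le_pow_left₀ (le_of_lt hδ) hsep'
      nlinarith
    calc ∑ l ∈ Finset.univ.erase k, ‖B l k‖
        ≤ ∑ l ∈ Finset.univ.erase k, Real.exp (-(r * δ ^ 2) / 2) * Real.exp (r * ‖s k‖ ^ 2) :=
          Finset.sum_le_sum hbound
      _ = ((m : ℝ) - 1) * (Real.exp (-(r * δ ^ 2) / 2) * Real.exp (r * ‖s k‖ ^ 2)) := by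
          rw [Finset.sum_const, nsmul_eq_mul]
          congr 1
          simp [Finset.card_erase_of_mem, Nat.cast_sub hm]
      _ < 1 * Real.exp (r * ‖s k‖ ^ 2) := by
          rw [← mul_assoc]
          exact mul_lt_mul_of_pos_right hsmall (Real.exp_pos _)
      _ = Real.exp (r * ‖s k‖ ^ 2) := one_mul _
  have hdetB : B.det ≠ 0 := det_ne_zero_of_sum_col_lt_diag hdom
  have hdetA : A.det ≠ 0 := by
    intro h
    apply hdetB
    rw [hB, Matrix.det_mul, Matrix.det_mul, h]
    ring
  rw [Matrix.isUnit_iff_isUnit_det]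
  exact hdetA.isUnit
end

section
/- Let d ≥ 2 and m ≥ 1 be integers, let s_1, …, s_m ∈ ℝ^d be pairwise distinct points that are all nonzero, let T* > 0 and let k ∈ ℤ. Then there exist complex vectors ρ_1, …, ρ_m ∈ ℂ^d with ρ_l·ρ_l = 2kπ i / T* for every l, such that the m × m complex matrix A_k with entries (A_k)_{l,j} = exp(ρ_l·s_j) is invertible. -/
open Filter Topology


open Filter Topology

-- Lemma A: from linear independence of functions on (1,∞) get points with invertible matrix
lemma auxPoints {m : ℕ} (g : Fin m → ℝ → ℂ)
    (h : ∀ c : Fin m → ℂ, (∀ t : ℝ, 1 < t → ∑ j, c j * g j t = 0) → c = 0) :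
    ∃ t : Fin m → ℝ, (∀ l, 1 < t l) ∧
      IsUnit (Matrix.of fun l j : Fin m => g j (t l)) := by
  have key : ∀ r : ℕ, r ≤ m → ∃ t : Fin r → ℝ, (∀ i, 1 < t i) ∧
      LinearIndependent ℂ (fun i : Fin r => (fun j => g j (t i) : Fin m → ℂ)) := by
    intro r
    induction r with
    | zero => intro _; exact ⟨fun i => 2, fun i => i.elim0, linearIndependent_empty_type⟩
    | succ r ih =>
      intro hr
      obtain ⟨t, ht, hli⟩ := ih (le_of_lt hr)
      set W : Submodule ℂ (Fin m → ℂ) :=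
        Submodule.span ℂ (Set.range fun i : Fin r => (fun j => g j (t i) : Fin m → ℂ)) with hW
      have hx : ∃ t' : ℝ, 1 < t' ∧ (fun j => g j t' : Fin m → ℂ) ∉ W := by
        by_contra hall
        push_neg at hall
        have hWtop : W < ⊤ := by
          rcases eq_or_lt_of_le (le_top : W ≤ ⊤) with heq | hlt
          · exfalso
            have h1 : Module.finrank ℂ W = r := by simpa using finrank_span_eq_card hli
            have h2 : Module.finrank ℂ (Fin m → ℂ) = m := by simp
            have := h1 ▸ heq ▸ (by rw [finrank_top, h2] :
              Module.finrank ℂ (⊤ : Submodule ℂ (Fin m → ℂ)) = m)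
            omega
          · exact hlt
        obtain ⟨φ, hφ0, hφ⟩ := W.exists_dual_map_eq_bot_of_lt_top hWtop inferInstance
        have expand : ∀ v : Fin m → ℂ, φ v = ∑ j, v j * φ (Pi.single j 1 : _) := by
          intro v
          have hv : v = ∑ j, v j • (Pi.single j 1 : Fin m → ℂ) := by
            funext j'
            simp [Finset.sum_apply, Pi.single_apply]
          conv_lhs => rw [hv]
          rw [map_sum]
          simp [smul_eq_mul]
        have hcc : (fun j => φ (Pi.single j 1)) = (0 : Fin m → ℂ) := by
          apply h
          intro t' ht'
          have hmem := hall t' ht'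
          have : φ (fun j => g j t') = 0 := by
            have : φ (fun j => g j t') ∈ W.map φ := Submodule.mem_map_of_mem hmem
            rwa [hφ, Submodule.mem_bot] at this
          rw [expand] at this
          simpa [mul_comm] using this
        apply hφ0
        apply LinearMap.ext
        intro v
        rw [expand]
        simp only [LinearMap.zero_apply]
        have : ∀ j, φ (Pi.single j 1 : Fin m → ℂ) = 0 := fun j => congrFun hcc j
        simp [this]
      obtain ⟨t', ht', hxW⟩ := hx
      refine ⟨(Fin.snoc t t' : Fin (r+1) → ℝ), ?_, ?_⟩
      · intro i
        refine Fin.lastCases ?_ ?_ i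
        · simpa using ht'
        · intro i; simpa using ht i
      · have : (fun i : Fin (r+1) => (fun j => g j ((Fin.snoc t t' : Fin (r+1) → ℝ) i) : Fin m → ℂ)) =
            Fin.snoc (fun i : Fin r => (fun j => g j (t i) : Fin m → ℂ))
              (fun j => g j t') := by
          funext i
          refine Fin.lastCases ?_ ?_ i <;> simp
        rw [this, linearIndependent_fin_snoc]
        exact ⟨hli, hxW⟩
  obtain ⟨t, ht, hli⟩ := key m le_rfl
  refine ⟨t, ht, ?_⟩
  rw [← Matrix.linearIndependent_rows_iff_isUnit]
  exact hli

open Filter Topology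

lemma auxDecay (δ ε : ℂ) (hδ : δ.re < 0) :
    Tendsto (fun t : ℝ => Complex.exp ((t : ℂ) * δ + ε / (t : ℂ))) atTop (𝓝 0) := by
  rw [tendsto_zero_iff_norm_tendsto_zero]
  have hre : ∀ t : ℝ, ‖Complex.exp ((t : ℂ) * δ + ε / (t : ℂ))‖ =
      Real.exp (t * δ.re + ε.re / t) := by
    intro t
    rw [Complex.norm_exp]
    congr 1
    simp [Complex.add_re, Complex.mul_re]
  simp only [hre]
  apply Real.tendsto_exp_atBot.comp
  apply tendsto_atBot_add_right_of_ge' _ 1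
  · exact Tendsto.atTop_mul_const_of_neg hδ tendsto_id
  · filter_upwards [(tendsto_const_nhds.div_atTop tendsto_id :
      Tendsto (fun t : ℝ => ε.re / t) atTop (𝓝 0)).eventually
        (eventually_le_nhds (by norm_num : (0:ℝ) < 1))] with t ht using ht

-- Lemma B
lemma auxIndep {m : ℕ} (μ ν : Fin m → ℂ) (hre : Function.Injective fun j => (μ j).re)
    (c : Fin m → ℂ)
    (hc : ∀ t : ℝ, 1 < t → ∑ j, c j * Complex.exp ((t : ℂ) * μ j + ν j / (t : ℂ)) = 0) :
    c = 0 := by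
  suffices H : ∀ S : Finset (Fin m), ∀ c : Fin m → ℂ,
      (∀ t : ℝ, 1 < t → ∑ j ∈ S, c j * Complex.exp ((t : ℂ) * μ j + ν j / (t : ℂ)) = 0) →
      ∀ j ∈ S, c j = 0 by
    funext j
    exact H Finset.univ c (fun t ht => by simpa using hc t ht) j (Finset.mem_univ j)
  intro S
  induction S using Finset.strongInduction with
  | _ S ih =>
    rcases S.eq_empty_or_nonempty with rfl | hne
    · intro c _ j hj; simp at hj
    · intro c hrel j hj
      obtain ⟨j₀, hj₀S, hj₀max⟩ := S.exists_max_image (fun j => (μ j).re) hne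
      -- divided relation
      have hdiv : ∀ t : ℝ, 1 < t →
          ∑ j ∈ S, c j * Complex.exp ((t : ℂ) * (μ j - μ j₀) + (ν j - ν j₀) / (t : ℂ)) = 0 := by
        intro t ht
        have h0 := hrel t ht
        have hne0 : Complex.exp ((t : ℂ) * μ j₀ + ν j₀ / (t : ℂ)) ≠ 0 := Complex.exp_ne_zero _
        have : ∑ j ∈ S, c j * Complex.exp ((t : ℂ) * (μ j - μ j₀) + (ν j - ν j₀) / (t : ℂ))
            = (∑ j ∈ S, c j * Complex.exp ((t : ℂ) * μ j + ν j / (t : ℂ))) *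
              (Complex.exp ((t : ℂ) * μ j₀ + ν j₀ / (t : ℂ)))⁻¹ := by
          rw [Finset.sum_mul]
          refine Finset.sum_congr rfl fun j _ => ?_
          rw [mul_assoc, ← Complex.exp_neg, ← Complex.exp_add]
          congr 2
          have htne : (t : ℂ) ≠ 0 := by
            exact_mod_cast ne_of_gt (lt_trans one_pos ht)
          field_simp
          ring
        rw [this, h0, zero_mul]
      -- limit of the divided sum is c j₀
      have hlim : Tendsto (fun t : ℝ =>
          ∑ j ∈ S, c j * Complex.exp ((t : ℂ) * (μ j - μ j₀) + (ν j - ν j₀) / (t : ℂ)))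
          atTop (𝓝 (c j₀)) := by
        have : (c j₀) = ∑ j ∈ S, (if j = j₀ then c j₀ else 0) := by
          rw [Finset.sum_ite_eq' S j₀ (fun _ => c j₀)]
          simp [hj₀S]
        rw [this]
        apply tendsto_finset_sum
        intro j hjS
        by_cases hjj : j = j₀
        · subst hjj
          simp only [if_pos rfl, sub_self, zero_div, mul_zero, add_zero, Complex.exp_zero,
            mul_one]
          exact tendsto_const_nhds
        · simp only [if_neg hjj]
          have hlt : (μ j - μ j₀).re < 0 := by
            rw [Complex.sub_re, sub_neg]
            rcases lt_or_eq_of_le (hj₀max j hjS) with h | h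
            · exact h
            · exact absurd (hre h) hjj
          simpa using (auxDecay (μ j - μ j₀) (ν j - ν j₀) hlt).const_mul (c j)
      have hc0 : c j₀ = 0 := by
        have h2 : Tendsto (fun t : ℝ =>
            ∑ j ∈ S, c j * Complex.exp ((t : ℂ) * (μ j - μ j₀) + (ν j - ν j₀) / (t : ℂ)))
            atTop (𝓝 0) := by
          apply Tendsto.congr' _ tendsto_const_nhds
          filter_upwards [eventually_gt_atTop 1] with t ht
          exact (hdiv t ht).symm
        exact tendsto_nhds_unique hlim h2
      by_cases hjj : j = j₀
      · rwa [hjj]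
      · refine ih (S.erase j₀) (Finset.erase_ssubset hj₀S) c ?_ j (Finset.mem_erase.mpr ⟨hjj, hj⟩)
        intro t ht
        have := hrel t ht
        rwa [← Finset.add_sum_erase S _ hj₀S, hc0, zero_mul, zero_add] at this

lemma auxGeneric {V : Type*} [AddCommGroup V] [Module ℝ V] {ι : Type*} [DecidableEq ι]
    (S : Finset ι) (φ : ι → Module.Dual ℝ V) (hφ : ∀ i ∈ S, φ i ≠ 0) :
    ∃ u : V, ∀ i ∈ S, φ i u ≠ 0 := by
  induction S using Finset.induction with
  | empty => exact ⟨0, fun i hi => absurd hi (Finset.notMem_empty i)⟩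
  | @insert a S ha ih =>
    obtain ⟨u, hu⟩ := ih (fun i hi => hφ i (Finset.mem_insert_of_mem hi))
    obtain ⟨v, hv⟩ := DFunLike.ne_iff.mp (hφ a (Finset.mem_insert_self a S))
    simp only [LinearMap.zero_apply] at hv
    set B : Finset ℝ := (insert a S).image (fun i => -(φ i u) / (φ i v)) with hB
    obtain ⟨t, htB⟩ := Infinite.exists_notMem_finset B
    refine ⟨u + t • v, ?_⟩
    intro i hi
    rw [map_add, map_smul, smul_eq_mul]
    by_cases hiv : φ i v = 0
    · have hiS : i ∈ S := by
        rcases Finset.mem_insert.mp hi with rfl | h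
        · exact absurd hiv hv
        · exact h
      rw [hiv, mul_zero, add_zero]
      exact hu i hiS
    · intro habs
      apply htB
      rw [hB, Finset.mem_image]
      refine ⟨i, hi, ?_⟩
      field_simp
      linarith [habs]


lemma auxAlg1 (t : ℝ) (ht : (1:ℝ) < t) (c : ℂ) :
    (((t:ℂ) + c/(t:ℂ))/2)^2 + (((t:ℂ) - c/(t:ℂ))/(2*Complex.I))^2 = c := by
  have htne : (t : ℂ) ≠ 0 := by exact_mod_cast ne_of_gt (lt_trans one_pos ht)
  field_simp [Complex.I_ne_zero]
  ring_nf
  rw [Complex.I_sq]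
  ring

lemma auxAlg2 (t : ℝ) (ht : (1:ℝ) < t) (c a b : ℂ) :
    (((t:ℂ) + c/(t:ℂ))/2) * a + (((t:ℂ) - c/(t:ℂ))/(2*Complex.I)) * b =
      (t:ℂ) * ((a - Complex.I*b)/2) + (c*(a + Complex.I*b)/2)/(t:ℂ) := by
  have htne : (t : ℂ) ≠ 0 := by exact_mod_cast ne_of_gt (lt_trans one_pos ht)
  field_simp [Complex.I_ne_zero]
  ring_nf
  rw [Complex.I_sq]
  ring

theorem stmt7 (d m : ℕ) (hd : 2 ≤ d) (hm : 1 ≤ m)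
    (s : Fin m → EuclideanSpace ℝ (Fin d))
    (hdist : Function.Injective s) (hnz : ∀ j, s j ≠ 0)
    (T : ℝ) (hT : 0 < T) (k : ℤ) :
    ∃ ρ : Fin m → (Fin d → ℂ),
      (∀ l, ∑ i, ρ l i ^ 2 = 2 * (k : ℂ) * (Real.pi : ℂ) * Complex.I / (T : ℂ)) ∧
      IsUnit (Matrix.of fun l j : Fin m =>
        Complex.exp (∑ i, ρ l i * (s j i : ℂ))) := by
  classical
  set c : ℂ := 2 * (k : ℂ) * (Real.pi : ℂ) * Complex.I / (T : ℂ) with hc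
  have hd0 : 0 < d := by omega
  set e₀ : EuclideanSpace ℝ (Fin d) := EuclideanSpace.single (⟨0, hd0⟩ : Fin d) (1 : ℝ) with he₀
  have he₀0 : e₀ ≠ 0 := by
    intro h
    have := congrFun (congrArg (fun x : EuclideanSpace ℝ (Fin d) => (x : Fin d → ℝ)) h) ⟨0, hd0⟩
    simp [he₀] at this
  have hinner : ∀ x y : EuclideanSpace ℝ (Fin d), (inner ℝ x y : ℝ) = ∑ i, x i * y i := by
    intro x y
    simp [PiLp.inner_apply, RCLike.inner_apply, mul_comm]
  have hinnerSL : ∀ x : EuclideanSpace ℝ (Fin d), x ≠ 0 → innerₛₗ ℝ x ≠ 0 := by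
    intro x hx h
    have := congrFun (congrArg DFunLike.coe h) x
    simp only [innerₛₗ_apply_apply, LinearMap.zero_apply] at this
    exact (inner_self_ne_zero.mpr hx) this
  -- generic vector u₀
  set ψ : Fin m × Fin m → Module.Dual ℝ (EuclideanSpace ℝ (Fin d)) :=
    fun p => if p.1 = p.2 then innerₛₗ ℝ e₀ else innerₛₗ ℝ (s p.1 - s p.2) with hψ
  obtain ⟨u₀, hu₀⟩ := auxGeneric Finset.univ ψ (by
    intro p _
    simp only [hψ]
    by_cases h : p.1 = p.2
    · rw [if_pos h]; exact hinnerSL _ he₀0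
    · rw [if_neg h]
      exact hinnerSL _ (sub_ne_zero.mpr (fun hs => h (hdist hs))))
  have hu₀0 : u₀ ≠ 0 := by
    intro h
    have := hu₀ (⟨0, hm⟩, ⟨0, hm⟩) (Finset.mem_univ _)
    simp only [hψ] at this
    simp [h] at this
  have hsep : ∀ j j', j ≠ j' → (inner ℝ (s j - s j') u₀ : ℝ) ≠ 0 := by
    intro j j' hjj
    have := hu₀ (j, j') (Finset.mem_univ _)
    simp only [hψ] at this
    rw [if_neg hjj] at this
    exact this
  -- normalize u and find orthogonal unit w
  set u : EuclideanSpace ℝ (Fin d) := ‖u₀‖⁻¹ • u₀ with hu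
  have hu1 : ‖u‖ = 1 := norm_smul_inv_norm hu₀0
  have hune : u ≠ 0 := by intro h; rw [h] at hu1; simp at hu1
  obtain ⟨w₀, hw₀0, hw₀⟩ : ∃ w₀ : EuclideanSpace ℝ (Fin d), w₀ ≠ 0 ∧ (inner ℝ u w₀ : ℝ) = 0 := by
    have hK : ((ℝ ∙ u)ᗮ : Submodule ℝ (EuclideanSpace ℝ (Fin d))) ≠ ⊥ := by
      intro h
      rw [Submodule.orthogonal_eq_bot_iff] at h
      have h1 : Module.finrank ℝ (ℝ ∙ u : Submodule ℝ (EuclideanSpace ℝ (Fin d))) = 1 :=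
        finrank_span_singleton hune
      rw [h, finrank_top] at h1
      simp [finrank_euclideanSpace_fin] at h1
      omega
    obtain ⟨w₀, hwK, hw0⟩ := Submodule.exists_mem_ne_zero_of_ne_bot hK
    exact ⟨w₀, hw0, (Submodule.mem_orthogonal _ _).mp hwK u (Submodule.mem_span_singleton_self u)⟩
  set w : EuclideanSpace ℝ (Fin d) := ‖w₀‖⁻¹ • w₀ with hw
  have hw1 : ‖w‖ = 1 := norm_smul_inv_norm hw₀0
  have huw : (inner ℝ u w : ℝ) = 0 := by
    rw [hw, inner_smul_right, hw₀, mul_zero]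
  -- coefficients
  set a : Fin m → ℝ := fun j => inner ℝ u (s j) with ha
  set b : Fin m → ℝ := fun j => inner ℝ w (s j) with hb
  have hainj : Function.Injective a := by
    intro j j' h
    by_contra hjj
    apply hsep j j' hjj
    have h2 : (inner ℝ u (s j - s j') : ℝ) = 0 := by
      rw [inner_sub_right]
      rw [ha] at h
      simpa using sub_eq_zero.mpr h
    rw [hu, real_inner_smul_left] at h2
    have h3 : ‖u₀‖⁻¹ ≠ 0 := inv_ne_zero (norm_ne_zero_iff.mpr hu₀0)
    rw [real_inner_comm]
    exact (mul_eq_zero.mp h2).resolve_left h3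
  -- exponent data
  set μ : Fin m → ℂ := fun j => ((a j : ℂ) - Complex.I * (b j : ℂ)) / 2 with hμ
  set ν : Fin m → ℂ := fun j => c * ((a j : ℂ) + Complex.I * (b j : ℂ)) / 2 with hν
  have hμre : Function.Injective fun j => (μ j).re := by
    have hre : ∀ j, (μ j).re = a j / 2 := by
      intro j
      rw [hμ]
      simp [Complex.div_re, Complex.sub_re, Complex.mul_re]
    intro j j' h
    simp only [hre] at h
    exact hainj (by linarith)
  obtain ⟨t, ht, hunit⟩ := auxPoints (fun j t => Complex.exp ((t : ℂ) * μ j + ν j / (t : ℂ)))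
    (fun cf hcf => auxIndep μ ν hμre cf hcf)
  -- the vectors ρ
  have htne : ∀ l, (t l : ℂ) ≠ 0 := fun l => by
    exact_mod_cast ne_of_gt (lt_trans one_pos (ht l))
  refine ⟨fun l i => (((t l : ℂ) + c / (t l : ℂ)) / 2) * (u i : ℂ) +
      (((t l : ℂ) - c / (t l : ℂ)) / (2 * Complex.I)) * (w i : ℂ), ?_, ?_⟩
  · intro l
    set p : ℂ := ((t l : ℂ) + c / (t l : ℂ)) / 2 with hp
    set q : ℂ := ((t l : ℂ) - c / (t l : ℂ)) / (2 * Complex.I) with hq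
    have hsum : ∑ i, (p * (u i : ℂ) + q * (w i : ℂ)) ^ 2 =
        p ^ 2 * (∑ i, (u i : ℂ) * (u i : ℂ)) + (2 * p * q) * (∑ i, (u i : ℂ) * (w i : ℂ)) +
          q ^ 2 * (∑ i, (w i : ℂ) * (w i : ℂ)) := by
      rw [Finset.mul_sum, Finset.mul_sum, Finset.mul_sum, ← Finset.sum_add_distrib,
        ← Finset.sum_add_distrib]
      exact Finset.sum_congr rfl fun i _ => by ring
    have cuu : ∑ i, (u i : ℂ) * (u i : ℂ) = 1 := by
      have : ∑ i, u i * u i = 1 := by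
        rw [← hinner, real_inner_self_eq_norm_sq, hu1]; norm_num
      calc ∑ i, (u i : ℂ) * (u i : ℂ) = ((∑ i, u i * u i : ℝ) : ℂ) := by push_cast; ring
        _ = 1 := by rw [this]; norm_num
    have cww : ∑ i, (w i : ℂ) * (w i : ℂ) = 1 := by
      have : ∑ i, w i * w i = 1 := by
        rw [← hinner, real_inner_self_eq_norm_sq, hw1]; norm_num
      calc ∑ i, (w i : ℂ) * (w i : ℂ) = ((∑ i, w i * w i : ℝ) : ℂ) := by push_cast; ring
        _ = 1 := by rw [this]; norm_num
    have cuw : ∑ i, (u i : ℂ) * (w i : ℂ) = 0 := by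
      have : ∑ i, u i * w i = 0 := by rw [← hinner]; exact huw
      calc ∑ i, (u i : ℂ) * (w i : ℂ) = ((∑ i, u i * w i : ℝ) : ℂ) := by push_cast; ring
        _ = 0 := by rw [this]; norm_num
    rw [hsum, cuu, cww, cuw]
    linear_combination auxAlg1 (t l) (ht l) c
  · have hmat : (Matrix.of fun l j : Fin m =>
        Complex.exp (∑ i, ((((t l : ℂ) + c / (t l : ℂ)) / 2) * (u i : ℂ) +
          (((t l : ℂ) - c / (t l : ℂ)) / (2 * Complex.I)) * (w i : ℂ)) * (s j i : ℂ))) =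
        (Matrix.of fun l j : Fin m =>
          Complex.exp ((t l : ℂ) * μ j + ν j / (t l : ℂ))) := by
      ext l j
      simp only [Matrix.of_apply]
      congr 1
      have hexp : ∑ i, ((((t l : ℂ) + c / (t l : ℂ)) / 2) * (u i : ℂ) +
          (((t l : ℂ) - c / (t l : ℂ)) / (2 * Complex.I)) * (w i : ℂ)) * (s j i : ℂ) =
          (((t l : ℂ) + c / (t l : ℂ)) / 2) * (∑ i, (u i : ℂ) * (s j i : ℂ)) +
          (((t l : ℂ) - c / (t l : ℂ)) / (2 * Complex.I)) * (∑ i, (w i : ℂ) * (s j i : ℂ)) := by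
        rw [Finset.mul_sum, Finset.mul_sum, ← Finset.sum_add_distrib]
        exact Finset.sum_congr rfl fun i _ => by ring
      have hca : ∑ i, (u i : ℂ) * (s j i : ℂ) = ((a j : ℝ) : ℂ) := by
        rw [ha]
        simp only [hinner]
        push_cast
        ring
      have hcb : ∑ i, (w i : ℂ) * (s j i : ℂ) = ((b j : ℝ) : ℂ) := by
        rw [hb]
        simp only [hinner]
        push_cast
        ring
      rw [hexp, hca, hcb]
      simp only [hμ, hν]
      linear_combination auxAlg2 (t l) (ht l) c ((a j : ℝ) : ℂ) ((b j : ℝ) : ℂ)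
    rw [hmat]
    exact hunit
end

section
/- Let m ≥ 1, let s_1, …, s_m ∈ ℝ² be points satisfying |s_j − s_l| ≥ δ for all j ≠ l for some δ > 0, and let r > 0 satisfy C := 1 − (m−1) exp(−r δ²/2) > 0. Let J : ℝ² → ℝ² be the rotation J(x₁, x₂) = (x₂, −x₁), set ρ_l = r s_l + i r J(s_l) ∈ ℂ², and let A₀ be the m × m complex matrix with entries exp(ρ_l·s_j). Then A₀ is invertible, and for all vectors Λ, Λ̂ ∈ ℂ^m one has the stability estimate ‖Λ − Λ̂‖₂ ≤ (1/C) ‖A₀Λ − A₀Λ̂‖₂, where ‖·‖₂ is the Euclidean norm on ℂ^m. -/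
lemma stmt9_aux_diag (dl : ℝ) (hdl : dl ≠ 0) (x : ℂ) :
    ((starRingEnd ℂ) x * (((dl * dl : ℝ) : ℂ) / ((dl : ℂ) * (dl : ℂ))) * x).re = ‖x‖ ^ 2 := by
  have h : (((dl * dl : ℝ) : ℂ) / ((dl : ℂ) * (dl : ℂ))) = 1 := by
    push_cast
    rw [div_self]
    exact mul_ne_zero (Complex.ofReal_ne_zero.mpr hdl) (Complex.ofReal_ne_zero.mpr hdl)
  rw [h, mul_one, mul_comm, Complex.mul_conj, Complex.ofReal_re, Complex.normSq_eq_norm_sq]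

lemma stmt9_aux_off (E dl dj : ℝ) (hdl : 0 < dl) (hdj : 0 < dj) (hE : 0 ≤ E) (a x y : ℂ)
    (ha : ‖a‖ ≤ dl * dj * E) :
    -(E * (‖x‖ * ‖y‖)) ≤ ((starRingEnd ℂ) x * (a / ((dl : ℂ) * (dj : ℂ))) * y).re := by
  have h1 : ‖(starRingEnd ℂ) x * (a / ((dl : ℂ) * (dj : ℂ))) * y‖
      = ‖x‖ * (‖a‖ / (dl * dj)) * ‖y‖ := by
    simp only [norm_mul, norm_div, Complex.norm_conj, Complex.norm_real, Real.norm_eq_abs,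
      abs_of_pos hdl, abs_of_pos hdj]
  have h2 : ‖a‖ / (dl * dj) ≤ E := by
    rw [div_le_iff₀ (by positivity)]
    nlinarith
  have h3 : ‖(starRingEnd ℂ) x * (a / ((dl : ℂ) * (dj : ℂ))) * y‖
      ≤ E * (‖x‖ * ‖y‖) := by
    rw [h1]
    calc ‖x‖ * (‖a‖ / (dl * dj)) * ‖y‖
        = (‖a‖ / (dl * dj)) * (‖x‖ * ‖y‖) := by ring
      _ ≤ E * (‖x‖ * ‖y‖) := by
          apply mul_le_mul_of_nonneg_right h2
          positivity
  have h4 := (abs_le.mp (Complex.abs_re_le_norm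
    ((starRingEnd ℂ) x * (a / ((dl : ℂ) * (dj : ℂ))) * y))).1
  linarith

lemma stmt9_aux_div {C a b : ℝ} (hC : 0 < C) (ha : 0 ≤ a) (hb : 0 ≤ b)
    (h : C * a ^ 2 ≤ a * b) : C * a ≤ b := by
  rcases eq_or_lt_of_le ha with h0 | h0
  · rw [← h0, mul_zero]; exact hb
  · nlinarith

lemma stmt9_aux_zero {C x : ℝ} (hC : 0 < C) (hx : 0 ≤ x) (h : C * x ≤ 0) : x = 0 := by
  nlinarith

set_option maxHeartbeats 2000000 in
theorem stmt9 (m : ℕ) (hm : 1 ≤ m) (s : Fin m → EuclideanSpace ℝ (Fin 2))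
    (δ r : ℝ) (hδ : 0 < δ) (hr : 0 < r)
    (hsep : ∀ j l, j ≠ l → δ ≤ ‖s j - s l‖)
    (C : ℝ) (hC : C = 1 - ((m : ℝ) - 1) * Real.exp (-(r * δ ^ 2) / 2)) (hCpos : 0 < C)
    (J : (Fin 2 → ℝ) → (Fin 2 → ℝ)) (hJ : J = fun x => ![x 1, -x 0])
    (ρ : Fin m → (Fin 2 → ℂ))
    (hρ : ∀ l, ρ l = fun i => (r * s l i : ℝ) + Complex.I * ((r * J (s l) i : ℝ) : ℂ))
    (A₀ : Matrix (Fin m) (Fin m) ℂ)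
    (hA : ∀ l j, A₀ l j = Complex.exp (∑ i, ρ l i * (s j i : ℂ))) :
    IsUnit A₀ ∧
    ∀ Λ Λ' : Fin m → ℂ,
      ‖(EuclideanSpace.equiv (Fin m) ℂ).symm (Λ - Λ')‖
        ≤ (1 / C) * ‖(EuclideanSpace.equiv (Fin m) ℂ).symm (A₀.mulVec Λ - A₀.mulVec Λ')‖ := by
  set e : ℝ := Real.exp (-(r * δ ^ 2) / 2) with he
  have hepos : 0 < e := Real.exp_pos _
  set ip : Fin m → Fin m → ℝ := fun l j => ∑ i, s l i * s j i with hip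
  have hz : ∀ l j, (∑ i, ρ l i * (s j i : ℂ))
      = ((r * ip l j : ℝ) : ℂ) + Complex.I * ((r * (s l 1 * s j 0 - s l 0 * s j 1) : ℝ) : ℂ) := by
    intro l j
    simp only [hρ, hJ, hip, Fin.sum_univ_two, Matrix.cons_val_zero, Matrix.cons_val_one,
      Matrix.head_cons]
    push_cast
    ring
  have habs : ∀ l j, ‖A₀ l j‖ = Real.exp (r * ip l j) := by
    intro l j
    rw [hA, hz, Complex.norm_exp]
    congr 1
    simp
  set d : Fin m → ℝ := fun l => Real.exp (r * ip l l / 2) with hd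
  have hd1 : ∀ l, 1 ≤ d l := by
    intro l
    apply Real.one_le_exp
    have : 0 ≤ ip l l := Finset.sum_nonneg fun i _ => mul_self_nonneg _
    positivity
  have hdpos : ∀ l, 0 < d l := fun l => lt_of_lt_of_le one_pos (hd1 l)
  have hdne : ∀ l, ((d l : ℂ)) ≠ 0 := fun l =>
    Complex.ofReal_ne_zero.mpr (ne_of_gt (hdpos l))
  have hdiag : ∀ l, A₀ l l = ((d l * d l : ℝ) : ℂ) := by
    intro l
    rw [hA, hz]
    have h1 : (r * (s l 1 * s l 0 - s l 0 * s l 1) : ℝ) = 0 := by ring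
    rw [h1]
    simp only [Complex.ofReal_zero, mul_zero, add_zero]
    rw [← Complex.ofReal_exp]
    congr 1
    rw [← Real.exp_add]
    congr 1
    ring
  have hsq : ∀ l j, l ≠ j → δ ^ 2 ≤ ip l l - 2 * ip l j + ip j j := by
    intro l j hlj
    have h1 : δ ≤ ‖s l - s j‖ := hsep l j hlj
    have h2 : ‖s l - s j‖ ^ 2 = ∑ i, (s l i - s j i) ^ 2 := by
      rw [EuclideanSpace.norm_eq, Real.sq_sqrt (Finset.sum_nonneg fun i _ => sq_nonneg _)]
      exact Finset.sum_congr rfl fun i _ => by rw [Real.norm_eq_abs, sq_abs]; rfl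
    have h3 : δ ^ 2 ≤ ‖s l - s j‖ ^ 2 := pow_le_pow_left₀ (le_of_lt hδ) h1 2
    rw [h2] at h3
    have h4 : ∑ i, (s l i - s j i) ^ 2 = ip l l - 2 * ip l j + ip j j := by
      simp only [hip, Fin.sum_univ_two]
      ring
    linarith
  have hoff : ∀ l j, l ≠ j → ‖A₀ l j‖ ≤ d l * d j * e := by
    intro l j hlj
    rw [habs, hd]
    calc Real.exp (r * ip l j)
        ≤ Real.exp (r * ip l l / 2 + r * ip j j / 2 + -(r * δ ^ 2) / 2) := by
          apply Real.exp_le_exp.mpr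
          nlinarith [hsq l j hlj, hr.le]
      _ = Real.exp (r * ip l l / 2) * Real.exp (r * ip j j / 2) * e := by
          rw [he, ← Real.exp_add, ← Real.exp_add]
  have key : ∀ w : Fin m → ℂ,
      C * ‖(EuclideanSpace.equiv (Fin m) ℂ).symm w‖
        ≤ ‖(EuclideanSpace.equiv (Fin m) ℂ).symm (A₀.mulVec w)‖ := by
    intro w
    set u : Fin m → ℂ := A₀.mulVec w with hu
    set v : Fin m → ℂ := fun l => (d l : ℂ) * w l with hv
    set vE : EuclideanSpace ℂ (Fin m) := (EuclideanSpace.equiv (Fin m) ℂ).symm v with hvE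
    set uE : EuclideanSpace ℂ (Fin m) := (EuclideanSpace.equiv (Fin m) ℂ).symm u with huE
    set wE : EuclideanSpace ℂ (Fin m) := (EuclideanSpace.equiv (Fin m) ℂ).symm w with hwE
    set u' : EuclideanSpace ℂ (Fin m) :=
      (EuclideanSpace.equiv (Fin m) ℂ).symm (fun l => u l / (d l : ℂ)) with hu'
    set V : ℝ := ∑ l, ‖v l‖ ^ 2 with hV
    have happ : ∀ (x : Fin m → ℂ) (l : Fin m),
        ((EuclideanSpace.equiv (Fin m) ℂ).symm x) l = x l := fun x l => rfl
    set T : ℂ := ∑ l, ∑ j, (starRingEnd ℂ) (v l) * (A₀ l j / ((d l : ℂ) * (d j : ℂ))) * v j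
      with hT
    have hTinner : T = inner ℂ vE u' := by
      rw [hT, PiLp.inner_apply]
      refine Finset.sum_congr rfl fun l _ => ?_
      simp only [RCLike.inner_apply, hvE, hu', happ, hu, Matrix.mulVec, dotProduct,
        Finset.sum_div, Finset.mul_sum, Finset.sum_mul]
      refine Finset.sum_congr rfl fun j _ => ?_
      simp only [hv]
      rw [map_mul, Complex.conj_ofReal]
      field_simp [hdne l, hdne j]
    have hreT : C * V ≤ T.re := by
      have hreT1 : T.re = ∑ l, ∑ j,
          ((starRingEnd ℂ) (v l) * (A₀ l j / ((d l : ℂ) * (d j : ℂ))) * v j).re := by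
        rw [hT, Complex.re_sum]
        exact Finset.sum_congr rfl fun l _ => Complex.re_sum _ _
      have hdiagterm : ∀ l,
          ((starRingEnd ℂ) (v l) * (A₀ l l / ((d l : ℂ) * (d l : ℂ))) * v l).re = ‖v l‖ ^ 2 := by
        intro l
        rw [hdiag l]
        exact stmt9_aux_diag (d l) (ne_of_gt (hdpos l)) (v l)
      have hoffterm : ∀ l j, j ≠ l →
          -(e * (‖v l‖ * ‖v j‖)) ≤
            ((starRingEnd ℂ) (v l) * (A₀ l j / ((d l : ℂ) * (d j : ℂ))) * v j).re := by
        intro l j hjl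
        exact stmt9_aux_off e (d l) (d j) (hdpos l) (hdpos j) hepos.le (A₀ l j) (v l) (v j)
          (hoff l j (Ne.symm hjl))
      have hsplit : T.re = V + ∑ l, ∑ j ∈ Finset.univ.erase l,
          ((starRingEnd ℂ) (v l) * (A₀ l j / ((d l : ℂ) * (d j : ℂ))) * v j).re := by
        rw [hreT1, hV, ← Finset.sum_add_distrib]
        refine Finset.sum_congr rfl fun l _ => ?_
        rw [← hdiagterm l]
        exact (Finset.add_sum_erase _ _ (Finset.mem_univ l)).symm
      have hpair : ∑ l, ∑ j ∈ Finset.univ.erase l, ‖v l‖ * ‖v j‖ ≤ ((m : ℝ) - 1) * V := by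
        have step2 : ∀ l : Fin m, ∑ j ∈ Finset.univ.erase l, (‖v l‖^2 + ‖v j‖^2)/2
            = (((m : ℝ) - 1) * ‖v l‖^2 + (V - ‖v l‖^2))/2 := by
          intro l
          rw [← Finset.sum_div]
          congr 1
          rw [Finset.sum_add_distrib, Finset.sum_const,
            Finset.card_erase_of_mem (Finset.mem_univ l), Finset.card_univ, Fintype.card_fin,
            Finset.sum_erase_eq_sub (Finset.mem_univ l), ← hV, nsmul_eq_mul,
            Nat.cast_sub hm, Nat.cast_one]
        calc ∑ l, ∑ j ∈ Finset.univ.erase l, ‖v l‖ * ‖v j‖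
            ≤ ∑ l : Fin m, (((m : ℝ) - 1) * ‖v l‖^2 + (V - ‖v l‖^2))/2 := by
              apply Finset.sum_le_sum
              intro l _
              rw [← step2 l]
              exact Finset.sum_le_sum fun j _ => by nlinarith [sq_nonneg (‖v l‖ - ‖v j‖)]
          _ = ((m : ℝ) - 1) * V := by
              rw [← Finset.sum_div, Finset.sum_add_distrib, ← Finset.mul_sum, ← hV,
                Finset.sum_sub_distrib, Finset.sum_const, Finset.card_univ, Fintype.card_fin,
                ← hV, nsmul_eq_mul]
              ring
      have hP : -(e * (((m : ℝ) - 1) * V)) ≤ ∑ l, ∑ j ∈ Finset.univ.erase l,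
          ((starRingEnd ℂ) (v l) * (A₀ l j / ((d l : ℂ) * (d j : ℂ))) * v j).re := by
        calc -(e * (((m : ℝ) - 1) * V))
            ≤ -(e * ∑ l, ∑ j ∈ Finset.univ.erase l, ‖v l‖ * ‖v j‖) := by
              have := mul_le_mul_of_nonneg_left hpair hepos.le
              linarith
          _ = ∑ l, ∑ j ∈ Finset.univ.erase l, -(e * (‖v l‖ * ‖v j‖)) := by
              rw [Finset.mul_sum, ← Finset.sum_neg_distrib]
              refine Finset.sum_congr rfl fun l _ => ?_
              rw [Finset.mul_sum, ← Finset.sum_neg_distrib]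
          _ ≤ _ := by
              apply Finset.sum_le_sum
              intro l _
              exact Finset.sum_le_sum fun j hj =>
                hoffterm l j (Finset.ne_of_mem_erase hj)
      have hCV : C * V = V - e * (((m : ℝ) - 1) * V) := by rw [hC]; ring
      rw [hsplit, hCV]
      linarith
    have hcs : T.re ≤ ‖vE‖ * ‖uE‖ := by
      have h1 : T.re ≤ ‖T‖ := Complex.re_le_norm T
      have h2 : ‖T‖ = ‖(inner ℂ vE u' : ℂ)‖ := by
        rw [hTinner]
      have h3 : ‖(inner ℂ vE u' : ℂ)‖ ≤ ‖vE‖ * ‖u'‖ := norm_inner_le_norm vE u'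
      have h4 : ‖u'‖ ≤ ‖uE‖ := by
        rw [hu', huE, EuclideanSpace.norm_eq, EuclideanSpace.norm_eq]
        apply Real.sqrt_le_sqrt
        apply Finset.sum_le_sum
        intro l _
        simp only [happ]
        rw [norm_div]
        have h6 : ‖((d l : ℝ) : ℂ)‖ = d l := by
          rw [Complex.norm_real, Real.norm_eq_abs, abs_of_pos (hdpos l)]
        rw [h6]
        exact pow_le_pow_left₀ (by positivity) (div_le_self (norm_nonneg _) (hd1 l)) 2
      calc T.re ≤ ‖T‖ := h1
        _ = ‖(inner ℂ vE u' : ℂ)‖ := h2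
        _ ≤ ‖vE‖ * ‖u'‖ := h3
        _ ≤ ‖vE‖ * ‖uE‖ := mul_le_mul_of_nonneg_left h4 (norm_nonneg _)
    have hVeq : ‖vE‖ ^ 2 = V := by
      rw [hvE, EuclideanSpace.norm_eq,
        Real.sq_sqrt (Finset.sum_nonneg fun i _ => sq_nonneg _)]
      simp only [happ, hV]
    have hwv : ‖wE‖ ≤ ‖vE‖ := by
      rw [hwE, hvE, EuclideanSpace.norm_eq, EuclideanSpace.norm_eq]
      apply Real.sqrt_le_sqrt
      apply Finset.sum_le_sum
      intro l _
      simp only [happ, hv]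
      rw [norm_mul]
      have h6 : ‖((d l : ℝ) : ℂ)‖ = d l := by
        rw [Complex.norm_real, Real.norm_eq_abs, abs_of_pos (hdpos l)]
      rw [h6]
      exact pow_le_pow_left₀ (norm_nonneg _)
        (le_mul_of_one_le_left (norm_nonneg _) (hd1 l)) 2
    have hmain : C * ‖vE‖ ^ 2 ≤ ‖vE‖ * ‖uE‖ := by
      rw [hVeq]; exact le_trans hreT hcs
    have h6 : C * ‖vE‖ ≤ ‖uE‖ :=
      stmt9_aux_div hCpos (norm_nonneg vE) (norm_nonneg uE) hmain
    calc C * ‖wE‖ ≤ C * ‖vE‖ := mul_le_mul_of_nonneg_left hwv (le_of_lt hCpos)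
      _ ≤ ‖uE‖ := h6
  constructor
  · rw [← Matrix.mulVec_injective_iff_isUnit]
    intro x y hxy
    have h0 : A₀.mulVec (x - y) = 0 := by rw [Matrix.mulVec_sub, hxy, sub_self]
    have hk := key (x - y)
    rw [h0] at hk
    have h1 : ‖(EuclideanSpace.equiv (Fin m) ℂ).symm (0 : Fin m → ℂ)‖ = 0 := by simp
    rw [h1] at hk
    have h2 : ‖(EuclideanSpace.equiv (Fin m) ℂ).symm (x - y)‖ = 0 :=
      stmt9_aux_zero hCpos (norm_nonneg _) hk
    have h3 : (EuclideanSpace.equiv (Fin m) ℂ).symm (x - y) = 0 := norm_eq_zero.mp h2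
    have h4 : x - y = 0 := by
      have h5 := congrArg (EuclideanSpace.equiv (Fin m) ℂ) h3
      rw [ContinuousLinearEquiv.apply_symm_apply, map_zero] at h5
      exact h5
    exact sub_eq_zero.mp h4
  · intro Λ Λ'
    rw [← Matrix.mulVec_sub]
    have hk := key (Λ - Λ')
    rw [one_div, inv_mul_eq_div, le_div_iff₀ hCpos]
    linarith
end

section
/- Let d ≥ 2 and m ≥ 1 be integers, let s_1, …, s_m ∈ ℝ^d be pairwise distinct, let μ ∈ ℝ be fixed, and let c_1, …, c_m ∈ ℂ. Suppose that ∑_{j=1}^m c_j exp(ρ·s_j) = 0 for every ρ ∈ ℂ^d satisfying ρ·ρ = μ i. Then c_j = 0 for every j = 1, …, m. -/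
open Finset Filter Real Topology

/-- the dot-product linear functional -/
noncomputable def dotL {d : ℕ} (u : Fin d → ℝ) : (Fin d → ℝ) →ₗ[ℝ] ℝ where
  toFun ξ := ∑ i, ξ i * u i
  map_add' x y := by simp [add_mul, Finset.sum_add_distrib]
  map_smul' r x := by simp [Finset.mul_sum, mul_assoc]

/-- There is a direction `ξ` separating the distinct points `s j`. -/
lemma exists_sep {d m : ℕ} (hd : 1 ≤ d) (s : Fin m → Fin d → ℝ)
    (hdist : Function.Injective s) :
    ∃ ξ : Fin d → ℝ, ξ ≠ 0 ∧ Function.Injective (fun j => ∑ i, ξ i * s j i) := by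
  have : Nonempty (Fin d) := ⟨⟨0, hd⟩⟩
  by_contra hcon
  push_neg at hcon
  set ι := Option {p : Fin m × Fin m // p.1 ≠ p.2}
  have : Finite ι := by infer_instance
  set p : ι → Subspace ℝ (Fin d → ℝ) := fun o =>
    Option.elim o ⊥ (fun q => LinearMap.ker (dotL (s q.1.1 - s q.1.2)))
  have hcov : ⋃ i, (p i : Set (Fin d → ℝ)) = Set.univ := by
    apply Set.eq_univ_of_forall
    intro ξ
    rcases eq_or_ne ξ 0 with h0 | h0
    · exact Set.mem_iUnion.mpr ⟨none, by simp [p, h0]⟩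
    · obtain ⟨j, k, hjk, hne⟩ : ∃ j k, (∑ i, ξ i * s j i) = (∑ i, ξ i * s k i) ∧ j ≠ k := by
        have := hcon ξ h0
        rw [Function.Injective] at this
        push_neg at this
        obtain ⟨j, k, h1, h2⟩ := this
        exact ⟨j, k, h1, h2⟩
      refine Set.mem_iUnion.mpr ⟨some ⟨(j, k), hne⟩, ?_⟩
      simp only [p, Option.elim, SetLike.mem_coe, LinearMap.mem_ker]
      show (∑ i, ξ i * (s j - s k) i) = 0
      simp only [Pi.sub_apply, mul_sub, Finset.sum_sub_distrib]
      rw [hjk, sub_self]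
  obtain ⟨i, hi⟩ := Subspace.exists_eq_top_of_iUnion_eq_univ hcov
  match i with
  | none =>
      have : (⊥ : Subspace ℝ (Fin d → ℝ)) = ⊤ := hi
      exact absurd this bot_ne_top
  | some q =>
      have hker : dotL (s q.1.1 - s q.1.2) = 0 := LinearMap.ker_eq_top.mp hi
      have := congrArg (fun L => L (s q.1.1 - s q.1.2)) hker
      simp only [dotL, LinearMap.coe_mk, AddHom.coe_mk, LinearMap.zero_apply] at this
      have hz : s q.1.1 - s q.1.2 = 0 := by
        have hnn : ∀ i ∈ Finset.univ, 0 ≤ (s q.1.1 - s q.1.2) i * (s q.1.1 - s q.1.2) i :=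
          fun i _ => mul_self_nonneg _
        funext i
        have := (Finset.sum_eq_zero_iff_of_nonneg hnn).mp this i (Finset.mem_univ i)
        exact mul_self_eq_zero.mp this
      exact q.2 (hdist (sub_eq_zero.mp hz))

/-- Elimination of coefficients in a vanishing exponential sum via the dominant term. -/
lemma elim_exp {m : ℕ} (c : Fin m → ℂ) (A D : Fin m → ℝ) (hA : Function.Injective A)
    (f : Fin m → ℝ → ℂ)
    (hre : ∀ j (t : ℝ), 0 < t → (f j t).re = t * A j + D j / t)
    (hsum : ∀ t : ℝ, 0 < t → ∑ j, c j * Complex.exp (f j t) = 0) :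
    ∀ j, c j = 0 := by
  by_contra hc
  push_neg at hc
  obtain ⟨j0, hj0⟩ := hc
  set S : Finset (Fin m) := Finset.univ.filter (fun j => c j ≠ 0) with hS
  have hSne : S.Nonempty := ⟨j0, by simp [hS, hj0]⟩
  obtain ⟨J, hJS, hJmax⟩ := S.exists_max_image A hSne
  have hcJ : c J ≠ 0 := (Finset.mem_filter.mp hJS).2
  set u : Fin m → ℝ → ℝ := fun j t =>
    ‖c j‖ * (Real.exp (t * (A j - A J)) * Real.exp (D j / t)) with hu
  have key : ∀ t : ℝ, 0 < t →
      ‖c J‖ * Real.exp (D J / t) ≤ ∑ j ∈ Finset.univ.erase J, u j t := by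
    intro t ht
    have h0 := hsum t ht
    have hsplit : c J * Complex.exp (f J t) + ∑ j ∈ Finset.univ.erase J,
        c j * Complex.exp (f j t) = 0 :=
      (Finset.add_sum_erase _ (fun j => c j * Complex.exp (f j t)) (Finset.mem_univ J)).trans h0
    have heq : c J * Complex.exp (f J t) =
        -∑ j ∈ Finset.univ.erase J, c j * Complex.exp (f j t) :=
      eq_neg_of_add_eq_zero_left hsplit
    have habs : ‖c J‖ * Real.exp (t * A J + D J / t) ≤
        ∑ j ∈ Finset.univ.erase J, ‖c j‖ * Real.exp (t * A j + D j / t) := by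
      calc ‖c J‖ * Real.exp (t * A J + D J / t)
          = ‖c J * Complex.exp (f J t)‖ := by
            rw [norm_mul, Complex.norm_exp, hre J t ht]
        _ = ‖∑ j ∈ Finset.univ.erase J, c j * Complex.exp (f j t)‖ := by
            rw [heq, norm_neg]
        _ ≤ ∑ j ∈ Finset.univ.erase J, ‖c j * Complex.exp (f j t)‖ :=
            norm_sum_le _ _
        _ = ∑ j ∈ Finset.univ.erase J, ‖c j‖ * Real.exp (t * A j + D j / t) := by
            refine Finset.sum_congr rfl fun j hj => ?_
            rw [norm_mul, Complex.norm_exp, hre j t ht]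
    have hpos : (0:ℝ) < Real.exp (t * A J) := Real.exp_pos _
    have hL : ‖c J‖ * Real.exp (D J / t) =
        ‖c J‖ * Real.exp (t * A J + D J / t) * (Real.exp (t * A J))⁻¹ := by
      rw [mul_assoc, ← Real.exp_neg, ← Real.exp_add]
      congr 2
      ring
    have hR : ∀ j, u j t =
        ‖c j‖ * Real.exp (t * A j + D j / t) * (Real.exp (t * A J))⁻¹ := by
      intro j
      rw [hu]
      simp only
      rw [mul_assoc, ← Real.exp_neg, ← Real.exp_add, ← Real.exp_add]
      congr 2
      ring
    rw [hL]
    calc ‖c J‖ * Real.exp (t * A J + D J / t) * (Real.exp (t * A J))⁻¹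
        ≤ (∑ j ∈ Finset.univ.erase J, ‖c j‖ * Real.exp (t * A j + D j / t)) *
          (Real.exp (t * A J))⁻¹ := by
          exact mul_le_mul_of_nonneg_right habs (inv_nonneg.mpr hpos.le)
      _ = ∑ j ∈ Finset.univ.erase J, u j t := by
          rw [Finset.sum_mul]
          exact Finset.sum_congr rfl fun j _ => (hR j).symm
  have hlim0 : Tendsto (fun t => ∑ j ∈ Finset.univ.erase J, u j t) atTop (𝓝 0) := by
    have : Tendsto (fun t : ℝ => ∑ j ∈ Finset.univ.erase J, u j t) atTop
        (𝓝 (∑ j ∈ Finset.univ.erase J, (0:ℝ))) := by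
      apply tendsto_finset_sum
      intro j hj
      rcases eq_or_ne (c j) 0 with h0 | h0
      · simp [hu, h0]
      · have hjS : j ∈ S := by simp [hS, h0]
        have hlt : A j < A J :=
          lt_of_le_of_ne (hJmax j hjS) (fun he => (Finset.mem_erase.mp hj).1 (hA he))
        have h1 : Tendsto (fun t : ℝ => Real.exp (t * (A j - A J))) atTop (𝓝 0) := by
          apply Real.tendsto_exp_atBot.comp
          exact Filter.Tendsto.atTop_mul_const_of_neg (by linarith) tendsto_id
        have h2 : Tendsto (fun t : ℝ => Real.exp (D j / t)) atTop (𝓝 1) := by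
          have hd : Tendsto (fun t : ℝ => D j / t) atTop (𝓝 0) :=
            Filter.Tendsto.div_atTop tendsto_const_nhds tendsto_id
          have := (Real.continuous_exp.tendsto 0).comp hd
          simpa [Function.comp_def] using this
        have := (tendsto_const_nhds (x := (‖c j‖ : ℝ))).mul (h1.mul h2)
        simpa [hu] using this
    simpa using this
  have hlimJ : Tendsto (fun t : ℝ => ‖c J‖ * Real.exp (D J / t)) atTop
      (𝓝 (‖c J‖)) := by
    have h2 : Tendsto (fun t : ℝ => Real.exp (D J / t)) atTop (𝓝 1) := by
      have hd : Tendsto (fun t : ℝ => D J / t) atTop (𝓝 0) :=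
        Filter.Tendsto.div_atTop tendsto_const_nhds tendsto_id
      have := (Real.continuous_exp.tendsto 0).comp hd
      simpa [Function.comp_def] using this
    have := (tendsto_const_nhds (x := (‖c J‖ : ℝ))).mul h2
    simpa using this
  have hle : ‖c J‖ ≤ 0 := by
    refine le_of_tendsto_of_tendsto hlimJ hlim0 ?_
    filter_upwards [eventually_gt_atTop 0] with t ht
    exact key t ht
  exact hcJ (norm_eq_zero.mp (le_antisymm hle (norm_nonneg _)))

lemma sum_sq_expand {d : ℕ} (x y : Fin d → ℝ) (a b : ℂ) :
    ∑ i, (a * (x i : ℂ) + b * (y i : ℂ))^2 =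
      a^2 * ((∑ i, x i ^ 2 : ℝ) : ℂ) + 2*a*b*((∑ i, x i * y i : ℝ) : ℂ)
        + b^2 * ((∑ i, y i ^ 2 : ℝ) : ℂ) := by
  push_cast
  rw [Finset.mul_sum, Finset.mul_sum, Finset.mul_sum, ← Finset.sum_add_distrib,
    ← Finset.sum_add_distrib]
  exact Finset.sum_congr rfl fun i _ => by ring

lemma sum_lin_expand {d : ℕ} (x y z : Fin d → ℝ) (a b : ℂ) :
    ∑ i, (a * (x i : ℂ) + b * (y i : ℂ)) * (z i : ℂ) =
      a * ((∑ i, x i * z i : ℝ) : ℂ) + b * ((∑ i, y i * z i : ℝ) : ℂ) := by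
  push_cast
  rw [Finset.mul_sum, Finset.mul_sum, ← Finset.sum_add_distrib]
  exact Finset.sum_congr rfl fun i _ => by ring

lemma key_alg (P Q t μ p q : ℂ) (hp : p^2 = P) (hq : q^2 = Q)
    (ht : t ≠ 0) (hP : P ≠ 0) (hQ : Q ≠ 0) :
    ((t + (μ/(4*P*Q*t))*Complex.I)*q)^2 * P
      + (Complex.I*(t - (μ/(4*P*Q*t))*Complex.I)*p)^2 * Q = μ * Complex.I := by
  subst hp hq
  have h2 : (Complex.I)^2 = -1 := Complex.I_sq
  have hp0 : p ≠ 0 := fun h0 => hP (by simp [h0])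
  have hq0 : q ≠ 0 := fun h0 => hQ (by simp [h0])
  have hσ : 4*p^2*q^2*t*(μ/(4*p^2*q^2*t)) = μ := by field_simp
  linear_combination p^2*q^2*(t - (μ/(4*p^2*q^2*t))*Complex.I)^2 * h2 + Complex.I * hσ

theorem stmt11 (d m : ℕ) (hd : 2 ≤ d) (hm : 1 ≤ m)
    (s : Fin m → (Fin d → ℝ)) (hdist : Function.Injective s)
    (μ : ℝ) (c : Fin m → ℂ)
    (h : ∀ ρ : Fin d → ℂ, (∑ i, ρ i ^ 2 = (μ : ℂ) * Complex.I) →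
      ∑ j, c j * Complex.exp (∑ i, ρ i * (s j i : ℂ)) = 0) :
    ∀ j, c j = 0 := by
  have hd1 : 1 ≤ d := le_trans (by norm_num) hd
  obtain ⟨ξ, hξ0, hξinj⟩ := exists_sep hd1 s hdist
  obtain ⟨i0, hi0⟩ := Function.ne_iff.mp hξ0
  have hi0' : ξ i0 ≠ 0 := by simpa using hi0
  obtain ⟨i1, hi1⟩ : ∃ i1 : Fin d, i1 ≠ i0 := by
    rcases eq_or_ne i0 ⟨0, by omega⟩ with he | he
    · exact ⟨⟨1, by omega⟩, by rw [he]; exact Fin.ne_of_val_ne (by norm_num)⟩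
    · exact ⟨⟨0, by omega⟩, Ne.symm he⟩
  set η : Fin d → ℝ := fun i => if i = i0 then ξ i1 else if i = i1 then -ξ i0 else 0 with hηdef
  have hηi1 : η i1 = -ξ i0 := by simp [hηdef, hi1]
  have horth : ∑ i, ξ i * η i = 0 := by
    have hsub : ∀ x ∈ Finset.univ, x ∉ ({i0, i1} : Finset (Fin d)) → ξ x * η x = 0 := by
      intro x _ hx
      simp only [Finset.mem_insert, Finset.mem_singleton] at hx
      push_neg at hx
      simp [hηdef, hx.1, hx.2]
    rw [← Finset.sum_subset (Finset.subset_univ _) hsub,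
      Finset.sum_pair (Ne.symm hi1)]
    simp [hηdef, hi1]
    ring
  set P := ∑ i, ξ i ^ 2 with hPdef
  set Q := ∑ i, η i ^ 2 with hQdef
  have hP : 0 < P :=
    Finset.sum_pos' (fun i _ => sq_nonneg _) ⟨i0, Finset.mem_univ _, by positivity⟩
  have hη1 : η i1 ≠ 0 := by rw [hηi1]; exact neg_ne_zero.mpr hi0'
  have hQ : 0 < Q :=
    Finset.sum_pos' (fun i _ => sq_nonneg _) ⟨i1, Finset.mem_univ _, by positivity⟩
  set p := Real.sqrt P with hpdef
  set q := Real.sqrt Q with hqdef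
  have hp2 : p^2 = P := Real.sq_sqrt hP.le
  have hq2 : q^2 = Q := Real.sq_sqrt hQ.le
  have hqpos : 0 < q := Real.sqrt_pos.mpr hQ
  set a : Fin m → ℝ := fun j => ∑ i, ξ i * s j i with hadef
  set b : Fin m → ℝ := fun j => ∑ i, η i * s j i with hbdef
  set A : Fin m → ℝ := fun j => q * a j with hAdef
  set D : Fin m → ℝ := fun j => μ * (p * b j) / (4*(P*Q)) with hDdef
  have hAinj : Function.Injective A := fun j k hjk => hξinj (mul_left_cancel₀ hqpos.ne' hjk)
  set σf : ℝ → ℝ := fun t => μ / (4*P*Q*t) with hσdef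
  set aa : ℝ → ℂ := fun t => ((t:ℂ) + ((σf t : ℝ):ℂ)*Complex.I) * (q:ℂ) with haadef
  set bb : ℝ → ℂ := fun t => Complex.I * ((t:ℂ) - ((σf t : ℝ):ℂ)*Complex.I) * (p:ℂ) with hbbdef
  set f : Fin m → ℝ → ℂ := fun j t => aa t * (a j : ℂ) + bb t * (b j : ℂ) with hfdef
  have hre : ∀ j (t : ℝ), 0 < t → (f j t).re = t * A j + D j / t := by
    intro j t ht
    simp only [hfdef, haadef, hbbdef, hAdef, hDdef, hσdef, Complex.add_re, Complex.mul_re,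
      Complex.mul_im, Complex.add_im, Complex.sub_re, Complex.sub_im, Complex.I_re,
      Complex.I_im, Complex.ofReal_re, Complex.ofReal_im]
    field_simp
    ring
  have hsum : ∀ t : ℝ, 0 < t → ∑ j, c j * Complex.exp (f j t) = 0 := by
    intro t ht
    have hσc : ((σf t : ℝ):ℂ) = (μ:ℂ) / (4*(P:ℂ)*(Q:ℂ)*(t:ℂ)) := by
      rw [hσdef]; push_cast; ring
    have hconstraint : ∑ i, (aa t * (ξ i:ℂ) + bb t * (η i:ℂ))^2 = (μ:ℂ) * Complex.I := by
      rw [sum_sq_expand, horth]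
      have hkey := key_alg (P:ℂ) (Q:ℂ) (t:ℂ) (μ:ℂ) (p:ℂ) (q:ℂ)
        (by exact_mod_cast congrArg Complex.ofReal hp2)
        (by exact_mod_cast congrArg Complex.ofReal hq2)
        (Complex.ofReal_ne_zero.mpr ht.ne')
        (Complex.ofReal_ne_zero.mpr hP.ne')
        (Complex.ofReal_ne_zero.mpr hQ.ne')
      simp only [← hPdef, ← hQdef, Complex.ofReal_zero, mul_zero, add_zero]
      show ((↑t + ((σf t : ℝ):ℂ) * Complex.I) * (q:ℂ))^2 * (P:ℂ)
        + (Complex.I * ((t:ℂ) - ((σf t : ℝ):ℂ)*Complex.I) * (p:ℂ))^2 * (Q:ℂ)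
          = (μ:ℂ) * Complex.I
      rw [hσc]
      exact hkey
    have hval := h (fun i => aa t * (ξ i:ℂ) + bb t * (η i:ℂ)) hconstraint
    have hexp : ∀ j, (∑ i, (aa t * (ξ i:ℂ) + bb t * (η i:ℂ)) * ((s j i : ℝ):ℂ)) = f j t :=
      fun j => by rw [sum_lin_expand]
    simp only [hexp] at hval
    exact hval
  exact elim_exp c A D hAinj f hre hsum
end
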